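/- Let X, Y1, Y2 be sets of complex numbers with |Y1| ≥ 2 and |Y2| ≥ 2 such that (X, Y1) and (X, Y2) are uniquely factorable constellation pairs. Suppose x, x̂ ∈ X, y1, ŷ1 ∈ Y1, y2, ŷ2 ∈ Y2 and h, ĥ ∈ ℂ² satisfy U(x, y1, y2)·h = U(x̂, ŷ1, ŷ2)·ĥ and this common vector in ℂ⁴ is nonzero. Then x = x̂, y1 = ŷ1, y2 = ŷ2, and h = ĥ. (Unique identification of both the channel coefficients and the transmitted signals in the noise-free case.) -/

import Mathlib

/-- A pair `(X, Y)` of sets of complex numbers is a uniquely factorable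
constellation pair (UFCP) if `x * y' = x' * y` with `x, x' ∈ X` and
`y, y' ∈ Y` implies `x = x'` and `y = y'`. -/
def IsUFCP (X Y : Set ℂ) : Prop :=
  ∀ x ∈ X, ∀ x' ∈ X, ∀ y ∈ Y, ∀ y' ∈ Y, x * y' = x' * y → x = x' ∧ y = y'

/-- The normalized `4 × 2` unitary UFCP space-time codeword matrix
`U(x, y₁, y₂)`. -/
noncomputable def Umat (x y1 y2 : ℂ) : Matrix (Fin 4) (Fin 2) ℂ :=
  (((Real.sqrt (‖x‖ ^ 2 + ‖y1‖ ^ 2 + ‖y2‖ ^ 2))⁻¹ : ℝ) : ℂ) •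
    !![x, 0; 0, starRingEnd ℂ x; y1, y2; -(starRingEnd ℂ y2), starRingEnd ℂ y1]

/-- The normalization factor of `Umat`, as a complex number. -/
noncomputable def nf (x y1 y2 : ℂ) : ℂ :=
  (((Real.sqrt (‖x‖ ^ 2 + ‖y1‖ ^ 2 + ‖y2‖ ^ 2))⁻¹ : ℝ) : ℂ)

lemma mv0 (x y1 y2 : ℂ) (h : Fin 2 → ℂ) :
    (Umat x y1 y2).mulVec h 0 = nf x y1 y2 * (x * h 0) := by
  simp [Umat, nf, Matrix.mulVec, dotProduct, Fin.sum_univ_two, Matrix.smul_apply]; ring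
lemma mv1 (x y1 y2 : ℂ) (h : Fin 2 → ℂ) :
    (Umat x y1 y2).mulVec h 1 = nf x y1 y2 * (starRingEnd ℂ x * h 1) := by
  simp [Umat, nf, Matrix.mulVec, dotProduct, Fin.sum_univ_two, Matrix.smul_apply]; ring
lemma mv2 (x y1 y2 : ℂ) (h : Fin 2 → ℂ) :
    (Umat x y1 y2).mulVec h 2 = nf x y1 y2 * (y1 * h 0 + y2 * h 1) := by
  simp [Umat, nf, Matrix.mulVec, dotProduct, Fin.sum_univ_two, Matrix.smul_apply]; ring
lemma mv3 (x y1 y2 : ℂ) (h : Fin 2 → ℂ) :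
    (Umat x y1 y2).mulVec h 3 = nf x y1 y2 * (-(starRingEnd ℂ y2) * h 0 + starRingEnd ℂ y1 * h 1) := by
  simp [Umat, nf, Matrix.mulVec, dotProduct, Fin.sum_univ_two, Matrix.smul_apply]; ring

/-- If `(X, Y)` is a UFCP and `Y` has at least two elements, then `0 ∉ X`. -/
lemma ufcp_mem_ne_zero {X Y : Set ℂ} (hY : Y.Nontrivial) (hU : IsUFCP X Y) {x : ℂ}
    (hx : x ∈ X) : x ≠ 0 := by
  rintro rfl
  obtain ⟨y, hy, y', hy', hne⟩ := hY
  exact hne (hU 0 hx 0 hx y' hy' y hy (by ring)).2.symm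

lemma nf_ne_zero {x y1 y2 : ℂ} (hx : x ≠ 0) : nf x y1 y2 ≠ 0 := by
  have hpos : 0 < ‖x‖ ^ 2 + ‖y1‖ ^ 2 + ‖y2‖ ^ 2 := by
    have h1 : 0 < ‖x‖ ^ 2 := pow_pos (norm_pos_iff.mpr hx) 2
    positivity
  have hs : Real.sqrt (‖x‖ ^ 2 + ‖y1‖ ^ 2 + ‖y2‖ ^ 2) ≠ 0 :=
    ne_of_gt (Real.sqrt_pos.mpr hpos)
  simp only [nf]
  exact Complex.ofReal_ne_zero.mpr (inv_ne_zero hs)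

/-- Unique identification of the channel coefficients and the transmitted
signals in the noise-free case: if `U(x, y₁, y₂) h = U(x̂, ŷ₁, ŷ₂) ĥ ≠ 0`,
then the signals and the channel coincide. -/
theorem ufcp_unique_identification (X Y1 Y2 : Set ℂ)
    (hY1 : Y1.Nontrivial) (hY2 : Y2.Nontrivial)
    (h1 : IsUFCP X Y1) (h2 : IsUFCP X Y2)
    (x x' y1 y1' y2 y2' : ℂ)
    (hx : x ∈ X) (hx' : x' ∈ X) (hy1 : y1 ∈ Y1) (hy1' : y1' ∈ Y1)
    (hy2 : y2 ∈ Y2) (hy2' : y2' ∈ Y2)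
    (h hhat : Fin 2 → ℂ)
    (heq : Matrix.mulVec (Umat x y1 y2) h = Matrix.mulVec (Umat x' y1' y2') hhat)
    (hne : Matrix.mulVec (Umat x y1 y2) h ≠ 0) :
    x = x' ∧ y1 = y1' ∧ y2 = y2' ∧ h = hhat := by
  have hx0 : x ≠ 0 := ufcp_mem_ne_zero hY1 h1 hx
  have hx0' : x' ≠ 0 := ufcp_mem_ne_zero hY1 h1 hx'
  have hcx0 : starRingEnd ℂ x ≠ 0 := by simpa using hx0
  have hcx0' : starRingEnd ℂ x' ≠ 0 := by simpa using hx0'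
  have hnf : nf x y1 y2 ≠ 0 := nf_ne_zero hx0
  have hnf' : nf x' y1' y2' ≠ 0 := nf_ne_zero hx0'
  have hh : h ≠ 0 := by rintro rfl; exact hne (Matrix.mulVec_zero _)
  set a : ℂ := nf x y1 y2 * h 0 with ha
  set b : ℂ := nf x y1 y2 * h 1 with hb
  set a' : ℂ := nf x' y1' y2' * hhat 0 with ha'
  set b' : ℂ := nf x' y1' y2' * hhat 1 with hb'
  have E0 : x * a = x' * a' := by
    have e := congrFun heq 0; rw [mv0, mv0] at e; rw [ha, ha']; linear_combination e
  have E1 : starRingEnd ℂ x * b = starRingEnd ℂ x' * b' := by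
    have e := congrFun heq 1; rw [mv1, mv1] at e; rw [hb, hb']; linear_combination e
  have E2 : y1 * a + y2 * b = y1' * a' + y2' * b' := by
    have e := congrFun heq 2; rw [mv2, mv2] at e
    rw [ha, hb, ha', hb']; linear_combination e
  have E3 : -(starRingEnd ℂ y2) * a + starRingEnd ℂ y1 * b
      = -(starRingEnd ℂ y2') * a' + starRingEnd ℂ y1' * b' := by
    have e := congrFun heq 3; rw [mv3, mv3] at e
    rw [ha, hb, ha', hb']; linear_combination e
  set α : ℂ := x * y1' - x' * y1 with hα
  set β : ℂ := starRingEnd ℂ x * y2' - starRingEnd ℂ x' * y2 with hβ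
  have A : -(starRingEnd ℂ x' * α) * a = x' * β * b := by
    rw [hα, hβ]
    linear_combination (x' * starRingEnd ℂ x') * E2 - (y1' * starRingEnd ℂ x') * E0
      - (x' * y2') * E1
  have B : starRingEnd ℂ x' * starRingEnd ℂ β * a = x' * starRingEnd ℂ α * b := by
    simp only [hα, hβ, map_sub, map_mul, RingHomCompTriple.comp_apply, Complex.conj_conj,
      RingHom.id_apply]
    linear_combination (x' * starRingEnd ℂ x') * E3
      + (starRingEnd ℂ y2' * starRingEnd ℂ x') * E0 - (x' * starRingEnd ℂ y1') * E1
  have keyA : (α * starRingEnd ℂ α + β * starRingEnd ℂ β) * a = 0 :=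
    mul_left_cancel₀ hcx0' (show starRingEnd ℂ x' *
        ((α * starRingEnd ℂ α + β * starRingEnd ℂ β) * a) = starRingEnd ℂ x' * 0 by
      linear_combination (-(starRingEnd ℂ α)) * A + β * B)
  have keyB : (α * starRingEnd ℂ α + β * starRingEnd ℂ β) * b = 0 :=
    mul_left_cancel₀ hx0' (show x' *
        ((α * starRingEnd ℂ α + β * starRingEnd ℂ β) * b) = x' * 0 by
      linear_combination (-(starRingEnd ℂ β)) * A - α * B)
  have hsum : α * starRingEnd ℂ α + β * starRingEnd ℂ β = 0 := by
    rcases mul_eq_zero.mp keyA with h' | h'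
    · exact h'
    rcases mul_eq_zero.mp keyB with h'' | h''
    · exact h''
    exfalso
    apply hh
    have h0 : h 0 = 0 := by
      rcases mul_eq_zero.mp (ha ▸ h') with hz | hz
      · exact absurd hz hnf
      · exact hz
    have h1 : h 1 = 0 := by
      rcases mul_eq_zero.mp (hb ▸ h'') with hz | hz
      · exact absurd hz hnf
      · exact hz
    funext i; fin_cases i <;> simpa [h0, h1]
  have hsum' : Complex.normSq α + Complex.normSq β = 0 := by
    have : ((Complex.normSq α : ℂ)) + ((Complex.normSq β : ℂ)) = 0 := by
      rw [← Complex.mul_conj, ← Complex.mul_conj]; exact hsum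
    exact_mod_cast this
  have hα0 : α = 0 := Complex.normSq_eq_zero.mp (by
    have := Complex.normSq_nonneg α
    have := Complex.normSq_nonneg β
    linarith)
  have hβ0 : β = 0 := Complex.normSq_eq_zero.mp (by
    have := Complex.normSq_nonneg α
    have := Complex.normSq_nonneg β
    linarith)
  have hfac : x * y1' = x' * y1 := by rw [hα] at hα0; linear_combination hα0
  obtain ⟨hxx, hyy1⟩ := h1 x hx x' hx' y1 hy1 y1' hy1' hfac
  have hyy2 : y2 = y2' := by
    rw [hβ, ← hxx] at hβ0
    have : starRingEnd ℂ x * (y2' - y2) = 0 := by linear_combination hβ0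
    rcases mul_eq_zero.mp this with hz | hz
    · exact absurd hz hcx0
    · linear_combination -hz
  refine ⟨hxx, hyy1, hyy2, ?_⟩
  subst hxx; subst hyy1; subst hyy2
  have hA : a = a' := mul_left_cancel₀ hx0 E0
  have hB : b = b' := mul_left_cancel₀ hcx0 E1
  have h0 : h 0 = hhat 0 := mul_left_cancel₀ hnf (by rw [← ha, ← ha', hA])
  have h1' : h 1 = hhat 1 := mul_left_cancel₀ hnf (by rw [← hb, ← hb', hB])
  funext i; fin_cases i <;> simpa [h0, h1']
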